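/- Let n ≥ 4 and let λ be real with 1 − λ·Z − λ²·Y ≠ 0. Define a_C = (1 + λ·X)/(1 − λ·Z − λ²·Y) and, for each k ∈ {1, …, n−2}, a_{P_k} = 1 + λ·k·a_C. Then a_C satisfies the core agent's interim best-response equation under the uniform prior over core-periphery networks: a_C = 1 + ((n−1)·λ/Δ)·[ ∑_{k=1}^{n−2} C(n−2, k−1)·a_{P_k} + ( ∑_{k=2}^{n} C(n−2, k−2) − C(n−2, n−3) )·a_C ]. (Together with a_{P_k} = 1 + λ·k·a_C, this is the Bayesian–Nash equilibrium when the prior is uniform over all core-periphery networks on n vertices.) -/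

import Mathlib

theorem stmt4_aux (lam Δ nn S1 S2 T aC : ℝ) (hΔ0 : Δ ≠ 0)
    (hden : 1 - lam * (nn * T / Δ) - lam ^ 2 * (nn * S2 / Δ) ≠ 0)
    (haC : aC = (1 + lam * (nn * S1 / Δ)) /
      (1 - lam * (nn * T / Δ) - lam ^ 2 * (nn * S2 / Δ))) :
    aC = 1 + nn * lam / Δ * (S1 + lam * aC * S2 + T * aC) := by
  have h2 : Δ * (1 - lam * (nn * T / Δ) - lam ^ 2 * (nn * S2 / Δ))
      = Δ - lam * (nn * T) - lam ^ 2 * (nn * S2) := by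
    field_simp
  have hden' : Δ - lam * (nn * T) - lam ^ 2 * (nn * S2) ≠ 0 := h2 ▸ mul_ne_zero hΔ0 hden
  have key : (1 + lam * (nn * S1 / Δ)) / (1 - lam * (nn * T / Δ) - lam ^ 2 * (nn * S2 / Δ))
      = (Δ + lam * (nn * S1)) / (Δ - lam * (nn * T) - lam ^ 2 * (nn * S2)) := by
    rw [div_eq_div_iff hden hden']
    field_simp
  rw [haC, key]
  have hden'' : Δ - lam * nn * T - lam ^ 2 * nn * S2 ≠ 0 := by convert hden' using 1; ring
  field_simp [hden'']
  ring

/-- With `Δ, X, Y, Z` the interim expectations under the uniform prior over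
core-periphery networks on `n ≥ 4` vertices, the core action
`a_C = (1 + λX)/(1 - λZ - λ²Y)` together with `a_{P_k} = 1 + λ k a_C` satisfies the
core agent's interim best-response equation. -/
theorem stmt_4 (n : ℕ) (hn : 4 ≤ n) (lam : ℝ)
    (Δ X Y Z : ℝ)
    (hΔ : Δ = 2 ^ (n - 1) - ((n : ℝ) - 1))
    (hX : X = ((n : ℝ) - 1) * (∑ k ∈ Finset.Icc 1 (n - 2), ((n - 2).choose (k - 1) : ℝ)) / Δ)
    (hY : Y = ((n : ℝ) - 1) * (∑ k ∈ Finset.Icc 1 (n - 2), (k : ℝ) * ((n - 2).choose (k - 1) : ℝ)) / Δ)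
    (hZ : Z = ((n : ℝ) - 1) *
      ((∑ k ∈ Finset.Icc 2 n, ((n - 2).choose (k - 2) : ℝ)) - ((n - 2).choose (n - 3) : ℝ)) / Δ)
    (hden : 1 - lam * Z - lam ^ 2 * Y ≠ 0)
    (aC : ℝ) (haC : aC = (1 + lam * X) / (1 - lam * Z - lam ^ 2 * Y))
    (aP : ℕ → ℝ) (haP : ∀ k ∈ Finset.Icc 1 (n - 2), aP k = 1 + lam * (k : ℝ) * aC) :
    aC = 1 + ((n : ℝ) - 1) * lam / Δ *
      ((∑ k ∈ Finset.Icc 1 (n - 2), ((n - 2).choose (k - 1) : ℝ) * aP k) +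
        ((∑ k ∈ Finset.Icc 2 n, ((n - 2).choose (k - 2) : ℝ)) - ((n - 2).choose (n - 3) : ℝ)) * aC) := by
  have hΔ0 : Δ ≠ 0 := by
    have h : ((n - 1 : ℕ) : ℝ) < ((2 ^ (n - 1) : ℕ) : ℝ) := by
      exact_mod_cast (Nat.lt_two_pow_self (n := n - 1))
    rw [Nat.cast_sub (by omega : 1 ≤ n), Nat.cast_pow] at h
    rw [hΔ]
    norm_num at h ⊢
    linarith
  have hsum : (∑ k ∈ Finset.Icc 1 (n - 2), ((n - 2).choose (k - 1) : ℝ) * aP k)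
      = (∑ k ∈ Finset.Icc 1 (n - 2), ((n - 2).choose (k - 1) : ℝ))
        + lam * aC * (∑ k ∈ Finset.Icc 1 (n - 2), (k : ℝ) * ((n - 2).choose (k - 1) : ℝ)) := by
    rw [Finset.mul_sum, ← Finset.sum_add_distrib]
    refine Finset.sum_congr rfl fun k hk => ?_
    rw [haP k hk]; ring
  rw [hsum]
  subst hX hY hZ
  exact stmt4_aux lam Δ ((n : ℝ) - 1) _ _ _ aC hΔ0 hden haC
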